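/- arXiv:2305.13882 — 3 statements merged into one kernel-verified Lean document; each statement's English description precedes it below -/
import Mathlib

section
/- If each gradient ∇Φᵢ is Lipschitз with constant L and satisfies the contractivity-at-infinity condition ⟨∇Φᵢ(x)−∇Φᵢ(y), x−y⟩ ≥ K‖x−y‖² for all ‖x−y‖ ≥ R, then each Φᵢ is (K/2, b)-dissipative, i.e. ⟨x, ∇Φᵢ(x)⟩ ≥ (K/2)‖x‖² − b for all x ∈ ℝᵈ, where b = max{ (K/2)R² + R·sup_{i} sup_{‖x‖≤R} ‖∇Φᵢ(x)‖, (1/(2K)) sup_i ‖∇Φᵢ(0)‖² }. -/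
open MeasureTheory Real
open scoped RealInnerProductSpace

noncomputable section

abbrev Euc (d : ℕ) := EuclideanSpace ℝ (Fin d)

/-- Lipschitz gradients plus contractivity at infinity imply
`(K/2, b)`-dissipativity with the explicit constant `b`. -/
theorem dissipative_of_contractive_at_infinity
    {d : ℕ} {ι : Type*} [Fintype ι] [Nonempty ι]
    (Φ : ι → Euc d → ℝ) (L K R : ℝ) (hL : 0 ≤ L) (hK : 0 < K) (hR : 0 < R)
    (hdiff : ∀ i, ∀ x : Euc d, DifferentiableAt ℝ (Φ i) x)
    (hLip : ∀ i, LipschitzWith L.toNNReal (gradient (Φ i)))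
    (hconv : ∀ i, ∀ x y : Euc d, R ≤ ‖x - y‖ →
      K * ‖x - y‖ ^ 2 ≤ ⟪gradient (Φ i) x - gradient (Φ i) y, x - y⟫) :
    ∀ i, ∀ x : Euc d,
      (K / 2) * ‖x‖ ^ 2 -
        max ((K / 2) * R ^ 2 +
              R * (⨆ i, ⨆ x : Metric.closedBall (0 : Euc d) R, ‖gradient (Φ i) x.1‖))
            ((1 / (2 * K)) * ⨆ i, ‖gradient (Φ i) 0‖ ^ 2)
      ≤ ⟪x, gradient (Φ i) x⟫ := by
  set G := fun i => gradient (Φ i) with hG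
  set S := ⨆ i, ⨆ x : Metric.closedBall (0 : Euc d) R, ‖G i x.1‖ with hS
  set T := ⨆ i, ‖G i 0‖ ^ 2 with hT
  have hzero : (0 : Euc d) ∈ Metric.closedBall (0 : Euc d) R := by
    simp [hR.le]
  haveI : Nonempty (Metric.closedBall (0 : Euc d) R) := ⟨⟨0, hzero⟩⟩
  have hbd : ∀ i, BddAbove (Set.range fun x : Metric.closedBall (0 : Euc d) R => ‖G i x.1‖) := by
    intro i
    refine ⟨‖G i 0‖ + L * R, ?_⟩
    rintro _ ⟨⟨x, hx⟩, rfl⟩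
    have h1 : ‖G i x - G i 0‖ ≤ L * ‖x - 0‖ := by
      have := (hLip i).dist_le_mul x 0
      simpa [dist_eq_norm, Real.coe_toNNReal L hL] using this
    have h2 : ‖x‖ ≤ R := by simpa [Metric.mem_closedBall, dist_eq_norm] using hx
    have h3 : ‖G i x‖ - ‖G i 0‖ ≤ ‖G i x - G i 0‖ := norm_sub_norm_le (G i x) (G i 0)
    rw [sub_zero] at h1
    nlinarith [mul_le_mul_of_nonneg_left h2 hL]
  have hSle : ∀ i, ∀ x : Euc d, ‖x‖ ≤ R → ‖G i x‖ ≤ S := by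
    intro i x hx
    have hmem : x ∈ Metric.closedBall (0 : Euc d) R := by
      simpa [Metric.mem_closedBall, dist_eq_norm] using hx
    have h1 : ‖G i x‖ ≤ ⨆ y : Metric.closedBall (0 : Euc d) R, ‖G i y.1‖ :=
      le_ciSup (hbd i) ⟨x, hmem⟩
    exact h1.trans (le_ciSup (f := fun j => ⨆ y : Metric.closedBall (0 : Euc d) R, ‖G j y.1‖)
      (Finite.bddAbove_range _) i)
  have hS0 : 0 ≤ S := le_trans (norm_nonneg _) (hSle (Classical.arbitrary ι) 0 (by simp [hR.le]))
  have hTle : ∀ i, ‖G i 0‖ ^ 2 ≤ T := fun i =>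
    le_ciSup (f := fun j => ‖G j 0‖ ^ 2) (Finite.bddAbove_range _) i
  intro i x
  by_cases hcase : R ≤ ‖x‖
  · have h1 := hconv i x 0 (by simpa using hcase)
    rw [sub_zero] at h1
    have h2 : ⟪G i x - G i 0, x⟫ = ⟪x, G i x⟫ - ⟪G i 0, x⟫ := by
      rw [inner_sub_left, real_inner_comm x (G i x)]
    have h3 : -(‖G i 0‖ * ‖x‖) ≤ ⟪G i 0, x⟫ := by
      have ha := abs_real_inner_le_norm (G i 0) x
      have hb := neg_abs_le (⟪G i 0, x⟫ : ℝ)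
      linarith
    have hyoung : ‖G i 0‖ * ‖x‖ ≤ (1 / (2 * K)) * ‖G i 0‖ ^ 2 + (K / 2) * ‖x‖ ^ 2 := by
      have hc : (1 / (2 * K)) * ‖G i 0‖ ^ 2 * (2 * K) = ‖G i 0‖ ^ 2 := by
        field_simp
      nlinarith [sq_nonneg (‖G i 0‖ - K * ‖x‖), hK]
    have hmax : (1 / (2 * K)) * ‖G i 0‖ ^ 2 ≤
        max ((K / 2) * R ^ 2 + R * S) ((1 / (2 * K)) * T) := by
      refine le_trans ?_ (le_max_right _ _)
      exact mul_le_mul_of_nonneg_left (hTle i) (by positivity)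
    rw [h2] at h1
    linarith
  · push_neg at hcase
    have hSx : ‖G i x‖ ≤ S := hSle i x hcase.le
    have h3 : -(‖x‖ * ‖G i x‖) ≤ ⟪x, gradient (Φ i) x⟫ := by
      have ha := abs_real_inner_le_norm x (G i x)
      have hb := neg_abs_le (⟪x, G i x⟫ : ℝ)
      exact by linarith
    have h4 : ‖x‖ * ‖G i x‖ ≤ R * S :=
      mul_le_mul hcase.le hSx (norm_nonneg _) hR.le
    have hmax : (K / 2) * R ^ 2 + R * S ≤
        max ((K / 2) * R ^ 2 + R * S) ((1 / (2 * K)) * T) := le_max_left _ _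
    have h5 : K / 2 * ‖x‖ ^ 2 ≤ K / 2 * R ^ 2 := by
      have hx2 : ‖x‖ ^ 2 ≤ R ^ 2 := by nlinarith [norm_nonneg x, hcase.le]
      exact mul_le_mul_of_nonneg_left hx2 (by positivity)
    linarith
end
end

section
/- There exists a continuously differentiable function Φ : ℝ → ℝ such that x·Φ'(x) ≥ x²/2 for all x (so Φ is (1/2,0)-dissipative), but Φ does not satisfy the contractivity-at-infinity condition: for every K, R > 0 there exist x, y with ‖x−y‖ ≥ R and (Φ'(x)−Φ'(y))(x−y) < K(x−y)². Concretely, one may take Φ' odd with Φ'(x)=x for 0≤x≤2, and for 2ⁿ ≤ x < 2ⁿ⁺¹ (n≥1): Φ'(x)=2ⁿ on [2ⁿ, 2ⁿ+log n] and linear from 2ⁿ to 2ⁿ⁺¹ on the remainder; then Φ' is constant on intervals [2ⁿ, 2ⁿ+log n] of unbounded length, violating the condition. -/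
open Real

private noncomputable def hfun (t : ℝ) : ℝ :=
  t * (3 + Real.sin (4 * Real.log (1 + t ^ 2))) / 4

private lemma hfun_cont : Continuous hfun := by
  unfold hfun
  have h1 : Continuous fun t : ℝ => Real.log (1 + t ^ 2) := by
    apply Continuous.log (by continuity)
    intro t; positivity
  continuity

/-- dissipativeness is strictly weaker than contractivity at infinity:
there is a `C¹` function `Φ : ℝ → ℝ` with `x·Φ'(x) ≥ x²/2` for all `x`
(i.e. `(1/2, 0)`-dissipative), which for every `K, R > 0` violates the
contractivity-at-infinity condition. -/
theorem dissipative_not_contractive_at_infinity :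
    ∃ Φ : ℝ → ℝ, ContDiff ℝ 1 Φ ∧
      (∀ x : ℝ, x ^ 2 / 2 ≤ x * deriv Φ x) ∧
      (∀ K R : ℝ, 0 < K → 0 < R → ∃ x y : ℝ, R ≤ |x - y| ∧
        (deriv Φ x - deriv Φ y) * (x - y) < K * (x - y) ^ 2) := by
  refine ⟨fun u => ∫ t in (0:ℝ)..u, hfun t, ?_, ?_, ?_⟩
  · rw [contDiff_one_iff_deriv]
    constructor
    · intro x
      exact ((hfun_cont.integral_hasStrictDerivAt 0 x).hasDerivAt).differentiableAt
    · have : deriv (fun u => ∫ t in (0:ℝ)..u, hfun t) = hfun := by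
        funext x; exact Continuous.deriv_integral _ hfun_cont 0 x
      rw [this]; exact hfun_cont
  · intro x
    rw [Continuous.deriv_integral _ hfun_cont 0 x]
    unfold hfun
    have hs : -1 ≤ Real.sin (4 * Real.log (1 + x ^ 2)) := Real.neg_one_le_sin _
    nlinarith [sq_nonneg x]
  · intro K R hK hR
    set n : ℕ := ⌈7 * R ^ 2 + 4⌉₊ with hn
    have hnR : 7 * R ^ 2 + 4 ≤ (n : ℝ) := Nat.le_ceil _
    set a : ℝ := π / 8 + π / 2 * n with ha
    have hpi : (3.141592 : ℝ) < π := Real.pi_gt_d6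
    have hpi4 : π < 3.15 := Real.pi_lt_d2
    have hn0 : (0:ℝ) ≤ n := Nat.cast_nonneg n
    have han : (n : ℝ) ≤ a := by
      have h1 := mul_le_mul_of_nonneg_right (by linarith : (1:ℝ) ≤ π / 2) hn0
      rw [ha]; nlinarith
    have ha0 : 0 < a := by nlinarith
    set E : ℝ := Real.exp a with hE
    have hEa : a + 1 < E := by
      have := Real.add_one_lt_exp (ne_of_gt ha0)
      linarith [this]
    have hER : 7 * R ^ 2 + 4 < E := by nlinarith
    have hE1 : 1 ≤ E := by nlinarith
    set c : ℝ := Real.exp (π / 4) with hc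
    have hc2 : 2 < c := by
      have h2 : Real.log 2 < π / 4 := by
        have := Real.log_two_lt_d9; nlinarith
      calc (2:ℝ) = Real.exp (Real.log 2) := (Real.exp_log (by norm_num)).symm
        _ < c := Real.exp_lt_exp.mpr h2
    have hc3 : c < 2.72 := by
      have h1 : c < Real.exp 1 := Real.exp_lt_exp.mpr (by nlinarith)
      have := Real.exp_one_lt_d9
      linarith
    set y : ℝ := Real.sqrt (E - 1) with hy
    set x : ℝ := Real.sqrt (E * c - 1) with hx
    have hy0 : 0 ≤ y := Real.sqrt_nonneg _
    have hx0 : 0 ≤ x := Real.sqrt_nonneg _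
    have hy2 : y ^ 2 = E - 1 := Real.sq_sqrt (by linarith)
    have hx2 : x ^ 2 = E * c - 1 := Real.sq_sqrt (by nlinarith)
    -- derivative values
    have hsy : Real.sin (4 * Real.log (1 + y ^ 2)) = 1 := by
      have h1 : (1 : ℝ) + y ^ 2 = E := by linarith
      rw [h1, hE, Real.log_exp]
      have h4a : 4 * a = π / 2 + n * (2 * π) := by rw [ha]; ring
      rw [h4a, Real.sin_add_nat_mul_two_pi, Real.sin_pi_div_two]
    have hsx : Real.sin (4 * Real.log (1 + x ^ 2)) = -1 := by
      have h1 : (1 : ℝ) + x ^ 2 = E * c := by linarith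
      rw [h1, hE, hc, ← Real.exp_add, Real.log_exp]
      have h4a : 4 * (a + π / 4) = π / 2 + π + n * (2 * π) := by rw [ha]; ring
      rw [h4a, Real.sin_add_nat_mul_two_pi]
      have : π / 2 + π = π / 2 + π := rfl
      rw [Real.sin_add_pi, Real.sin_pi_div_two]
    have hdx : deriv (fun u => ∫ t in (0:ℝ)..u, hfun t) x = x / 2 := by
      rw [Continuous.deriv_integral _ hfun_cont 0 x]
      unfold hfun; rw [hsx]; ring
    have hdy : deriv (fun u => ∫ t in (0:ℝ)..u, hfun t) y = y := by
      rw [Continuous.deriv_integral _ hfun_cont 0 y]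
      unfold hfun; rw [hsy]; ring
    -- x - y ≥ R
    clear hsy hsx hEa han hn0 hnR hpi hpi4 ha0
    clear_value n a E c y x
    clear hn ha hE hc hy hx
    have step1 : 2 * R * y + R ^ 2 ≤ E := by
      nlinarith [sq_nonneg (y - 3 * R)]
    have step2 : (y + R) ^ 2 ≤ x ^ 2 := by nlinarith
    have step3 : y + R ≤ x := le_of_pow_le_pow_left₀ two_ne_zero hx0 step2
    have hxyR : R ≤ x - y := by linarith
    have hxy0 : 0 < x - y := lt_of_lt_of_le hR hxyR
    -- x < 2 y
    have hx2y : x < 2 * y := by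
      have h4 : x ^ 2 < (2 * y) ^ 2 := by nlinarith
      exact lt_of_pow_lt_pow_left₀ 2 (by linarith) h4
    refine ⟨x, y, ?_, ?_⟩
    · rwa [abs_of_pos hxy0]
    · rw [hdx, hdy]
      have hL : (x / 2 - y) * (x - y) < 0 :=
        mul_neg_of_neg_of_pos (by linarith) hxy0
      have hRp : 0 < K * (x - y) ^ 2 := by positivity
      linarith
end

section
/- Pointwise drift inequality: if ∇Φᵢ is L-Lipschitz and ⟨∇Φᵢ(x)−∇Φᵢ(y),x−y⟩ ≥ K‖x−y‖² for ‖x−y‖ ≥ R, then for all θ ∈ ℝᵈ: −2⟨θ, ∇Φᵢ(θ)⟩ ≤ C_Φ − K‖θ‖², where C_Φ = 2(L+K)R² + ‖∇Φᵢ(0)‖²/K. -/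
open MeasureTheory Real
open scoped RealInnerProductSpace

noncomputable section

/-- pointwise drift inequality. If `∇Φ` is `L`-Lipschitz and satisfies the
contractivity-at-infinity condition with constants `(K, R)`, then for all `θ`:
`−2⟨θ, ∇Φ(θ)⟩ ≤ C_Φ − K‖θ‖²` with `C_Φ = 2(L+K)R² + ‖∇Φ(0)‖²/K`. -/
theorem pointwise_drift_inequality {d : ℕ} (Φ : Euc d → ℝ) (L K R : ℝ)
    (hL : 0 ≤ L) (hK : 0 < K) (hR : 0 < R)
    (hdiff : ∀ x : Euc d, DifferentiableAt ℝ Φ x)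
    (hLip : LipschitzWith L.toNNReal (gradient Φ))
    (hconv : ∀ x y : Euc d, R ≤ ‖x - y‖ →
      K * ‖x - y‖ ^ 2 ≤ ⟪gradient Φ x - gradient Φ y, x - y⟫) :
    ∀ θ : Euc d, -2 * ⟪θ, gradient Φ θ⟫ ≤
      (2 * (L + K) * R ^ 2 + ‖gradient Φ 0‖ ^ 2 / K) - K * ‖θ‖ ^ 2 := by
  intro θ
  set g := gradient Φ with hg
  -- split the inner product
  have hsplit : ⟪θ, g θ⟫ = ⟪θ, g θ - g 0⟫ + ⟪θ, g 0⟫ := by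
    rw [inner_sub_right]; ring
  -- Young's inequality part
  have hcs : |⟪θ, g 0⟫| ≤ ‖θ‖ * ‖g 0‖ := abs_real_inner_le_norm θ (g 0)
  have habs : -⟪θ, g 0⟫ ≤ ‖θ‖ * ‖g 0‖ := by
    have := neg_abs_le ⟪θ, g 0⟫; linarith
  have young : -(2 * ⟪θ, g 0⟫) ≤ K * ‖θ‖ ^ 2 + ‖g 0‖ ^ 2 / K := by
    have h1 : 2 * (‖θ‖ * ‖g 0‖) ≤ K * ‖θ‖ ^ 2 + ‖g 0‖ ^ 2 / K := by
      have hdiv : ‖g 0‖ ^ 2 / K * K = ‖g 0‖ ^ 2 := div_mul_cancel₀ _ hK.ne'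
      nlinarith [sq_nonneg (K * ‖θ‖ - ‖g 0‖), hK]
    linarith
  rcases le_or_gt R ‖θ‖ with hcase | hcase
  · -- far case: use contractivity with y = 0
    have h0 : R ≤ ‖θ - 0‖ := by simpa using hcase
    have hc := hconv θ 0 h0
    rw [sub_zero] at hc
    have hc' : K * ‖θ‖ ^ 2 ≤ ⟪θ, g θ - g 0⟫ := by
      rwa [real_inner_comm]
    have hRsq : 0 ≤ 2 * (L + K) * R ^ 2 := by positivity
    rw [hsplit]
    nlinarith
  · -- near case: use Lipschitz bound
    have hlip := hLip.dist_le_mul θ 0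
    simp only [dist_eq_norm, sub_zero, Real.coe_toNNReal L hL] at hlip
    have hcs2 : |⟪θ, g θ - g 0⟫| ≤ ‖θ‖ * ‖g θ - g 0‖ := abs_real_inner_le_norm _ _
    have h1 : -⟪θ, g θ - g 0⟫ ≤ ‖θ‖ * (L * ‖θ‖) := by
      have := neg_abs_le ⟪θ, g θ - g 0⟫
      have h2 : ‖θ‖ * ‖g θ - g 0‖ ≤ ‖θ‖ * (L * ‖θ‖) :=
        mul_le_mul_of_nonneg_left hlip (norm_nonneg θ)
      linarith
    have hθR : ‖θ‖ ^ 2 ≤ R ^ 2 := by nlinarith [norm_nonneg θ]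
    rw [hsplit]
    nlinarith
end
end
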